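/- Let V be a closed subspace of a real Hilbert space H, ι : V →L[ℝ] H the inclusion, π : H →L[ℝ] V the orthogonal projection, and β > 0. For X : V →L[ℝ] V define E(X) = ι ∘ X ∘ π + β⁻¹ • (1 − ι ∘ π). Then: (i) if X is positive definite on V, then E(X) is positive definite on H; and (ii) if X and Y are positive definite on V and c ≥ 0 satisfies |Real.log ⟪X v, v⟫ − Real.log ⟪Y v, v⟫| ≤ c for every v ∈ V with v ≠ 0, then |Real.log ⟪E(X) u, u⟫ − Real.log ⟪E(Y) u, u⟫| ≤ c for every u ∈ H with u ≠ 0. (This is the pointwise form of d_σ(E(X), E(Y)) ≤ d_σ(X, Y).) -/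

import Mathlib

open scoped RealInnerProductSpace

private lemma log_shift_le {a b t c : ℝ} (ha : 0 < a) (hb : 0 < b) (ht : 0 ≤ t)
    (hc : 0 ≤ c) (h : Real.log a - Real.log b ≤ c) :
    Real.log (a + t) - Real.log (b + t) ≤ c := by
  rcases le_total a b with hab | hab
  · have : Real.log (a + t) ≤ Real.log (b + t) :=
      Real.log_le_log (by linarith) (by linarith)
    linarith
  · have key : Real.log (a + t) - Real.log (b + t) ≤ Real.log a - Real.log b := by
      have h1 : Real.log ((a + t) * b) ≤ Real.log (a * (b + t)) :=
        Real.log_le_log (by positivity) (by nlinarith)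
      rw [Real.log_mul (by positivity) (ne_of_gt hb),
        Real.log_mul (ne_of_gt ha) (by positivity)] at h1
      linarith
    linarith

private lemma inner_E {H : Type*} [NormedAddCommGroup H] [InnerProductSpace ℝ H]
    [CompleteSpace H] (V : Submodule ℝ H) [CompleteSpace V] (β : ℝ)
    (X : V →L[ℝ] V) (u : H) :
    ⟪(V.subtypeL.comp (X.comp (V.orthogonalProjectionOnto)) +
        β⁻¹ • (1 - V.subtypeL.comp (V.orthogonalProjectionOnto))) u, u⟫ =
      ⟪X (V.orthogonalProjectionOnto u), V.orthogonalProjectionOnto u⟫ +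
        β⁻¹ * ‖u - (V.orthogonalProjectionOnto u : H)‖ ^ 2 := by
  set v := V.orthogonalProjectionOnto u with hv
  have hw : u - (v : H) ∈ Vᗮ := V.sub_starProjection_mem_orthogonal u
  have h1 : ⟪((X v : V) : H), u⟫ = ⟪X v, v⟫ := by
    have := (Submodule.mem_orthogonal V _).mp hw ((X v : V) : H) (X v).2
    have hsplit : ⟪((X v : V) : H), u⟫ = ⟪((X v : V) : H), (v : H)⟫ +
        ⟪((X v : V) : H), u - (v : H)⟫ := by
      rw [← inner_add_right]; congr 1; abel
    rw [hsplit, this, Submodule.coe_inner]; ring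
  have h2 : ⟪u - (v : H), u⟫ = ‖u - (v : H)‖ ^ 2 := by
    have hz := (Submodule.mem_orthogonal V _).mp hw (v : H) v.2
    have hsplit : ⟪u - (v : H), u⟫ = ⟪u - (v : H), (v : H)⟫ +
        ⟪u - (v : H), u - (v : H)⟫ := by
      rw [← inner_add_right]; congr 1; abel
    rw [hsplit, real_inner_comm, hz, real_inner_self_eq_norm_sq]; ring
  simp only [ContinuousLinearMap.add_apply, ContinuousLinearMap.smul_apply,
    ContinuousLinearMap.comp_apply, ContinuousLinearMap.sub_apply,
    ContinuousLinearMap.one_apply, Submodule.subtypeL_apply, inner_add_left,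
    real_inner_smul_left, inner_sub_left]
  rw [← hv]
  have h2' : ⟪u, u⟫ - ⟪(v : H), u⟫ = ‖u - (v : H)‖ ^ 2 := by
    rw [← inner_sub_left]; exact h2
  rw [h1, h2']

set_option maxHeartbeats 1000000 in
/-- The coarse-to-fine extension operator
`E(X) = ι X π + β⁻¹ (1 - ι π)` maps positive definite operators to positive
definite operators and is a contraction for the (pointwise) spectral distance:
`d_σ(E(X), E(Y)) ≤ d_σ(X, Y)`. -/
theorem extension_posDef_and_spectral_distance_lipschitz
    {H : Type*} [NormedAddCommGroup H] [InnerProductSpace ℝ H] [CompleteSpace H]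
    (V : Submodule ℝ H) [CompleteSpace V]
    (β : ℝ) (hβ : 0 < β)
    (E : (V →L[ℝ] V) → (H →L[ℝ] H))
    (hE : ∀ X : V →L[ℝ] V,
      E X = V.subtypeL.comp (X.comp (V.orthogonalProjectionOnto)) +
        β⁻¹ • (1 - V.subtypeL.comp (V.orthogonalProjectionOnto))) :
    (∀ X : V →L[ℝ] V, IsSelfAdjoint X → (∀ v : V, v ≠ 0 → 0 < ⟪X v, v⟫) →
      IsSelfAdjoint (E X) ∧ ∀ u : H, u ≠ 0 → 0 < ⟪E X u, u⟫) ∧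
    (∀ (X Y : V →L[ℝ] V) (c : ℝ), 0 ≤ c →
      IsSelfAdjoint X → (∀ v : V, v ≠ 0 → 0 < ⟪X v, v⟫) →
      IsSelfAdjoint Y → (∀ v : V, v ≠ 0 → 0 < ⟪Y v, v⟫) →
      (∀ v : V, v ≠ 0 → |Real.log ⟪X v, v⟫ - Real.log ⟪Y v, v⟫| ≤ c) →
      ∀ u : H, u ≠ 0 → |Real.log ⟪E X u, u⟫ - Real.log ⟪E Y u, u⟫| ≤ c) := by
  have hβi : 0 < β⁻¹ := inv_pos.mpr hβ
  have hP : IsSelfAdjoint (V.subtypeL.comp (V.orthogonalProjectionOnto : H →L[ℝ] V)) :=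
    isSelfAdjoint_starProjection V
  constructor
  · intro X hX hXpos
    constructor
    · rw [hE]
      have h1 : IsSelfAdjoint (V.subtypeL.comp (X.comp (V.orthogonalProjectionOnto))) := by
        rw [ContinuousLinearMap.isSelfAdjoint_iff']
        rw [ContinuousLinearMap.adjoint_comp, ContinuousLinearMap.adjoint_comp,
          Submodule.adjoint_subtypeL, Submodule.adjoint_orthogonalProjectionOnto, hX.adjoint_eq]
        exact ContinuousLinearMap.comp_assoc _ _ _
      show star _ = _
      rw [star_add, star_smul, star_sub, star_one, h1, hP, star_trivial]
    · intro u hu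
      rw [hE, inner_E]
      set v := V.orthogonalProjectionOnto u with hv
      by_cases hv0 : v = 0
      · rw [hv0]
        simp only [map_zero, inner_zero_left, zero_add, Submodule.coe_zero, sub_zero]
        have : 0 < ‖u‖ ^ 2 := by
          have := norm_pos_iff.mpr hu
          positivity
        positivity
      · have h1 := hXpos v hv0
        have h2 : 0 ≤ β⁻¹ * ‖u - ((v : V) : H)‖ ^ 2 := by positivity
        linarith
  · intro X Y c hc hX hXpos hY hYpos hd u hu
    rw [hE X, hE Y, inner_E, inner_E]
    set v := V.orthogonalProjectionOnto u with hv
    set t := β⁻¹ * ‖u - ((v : V) : H)‖ ^ 2 with htdef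
    by_cases hv0 : v = 0
    · rw [hv0]
      simp only [map_zero, inner_zero_left, zero_add, sub_self, abs_zero]
      exact hc
    · have ha := hXpos v hv0
      have hb := hYpos v hv0
      have ht : 0 ≤ t := by positivity
      have h := abs_sub_le_iff.mp (hd v hv0)
      rw [abs_sub_le_iff]
      exact ⟨log_shift_le ha hb ht hc h.1, log_shift_le hb ha ht hc h.2⟩
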